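/- Let ρ and σ be density matrices on ℂ^d with Nussbaum–Szkoła distributions P and Q satisfying supp P ⊆ supp Q. For a sample ω = (ω₁,…,ωₙ) let L_n(ω) = Σ_{k=1}^n log(P(ω_k)/Q(ω_k)) denote the log-likelihood ratio under the product distribution P^{⊗n}. Then for every n ≥ 1, every s with 0 < s < 1, every real R, and every ε with 0 ≤ ε ≤ 1 − s such that P^{⊗n}(L_n ≤ R) > ε/(1−s), one has D_h^ε(ρ^{⊗n} ‖ σ^{⊗n}) ≤ R − log( P^{⊗n}(L_n ≤ R) − ε/(1−s) ) − log s. -/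

import Mathlib

open Matrix BigOperators ComplexOrder Finset

noncomputable section

namespace InfoSpec

variable {ι κ : Type*} [Fintype ι] [Fintype κ]

lemma sum_mulVec (f : κ → Matrix ι ι ℂ) (u : ι → ℂ) :
    (∑ j, f j) *ᵥ u = ∑ j, f j *ᵥ u := by
  ext v
  simp only [Matrix.mulVec, dotProduct, Finset.sum_apply, Finset.sum_mul, Matrix.sum_apply]
  exact Finset.sum_comm

lemma vecMulVec_mulVec' (a b u : ι → ℂ) :
    vecMulVec a b *ᵥ u = (b ⬝ᵥ u) • a := by
  ext v
  simp only [Matrix.mulVec, dotProduct, vecMulVec_apply, Pi.smul_apply, smul_eq_mul,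
    Finset.mul_sum, Finset.sum_mul]
  exact Finset.sum_congr rfl fun t _ => by ring

lemma trace_mul_vecMulVec (T : Matrix ι ι ℂ) (u : ι → ℂ) :
    (T * vecMulVec u (star u)).trace = star u ⬝ᵥ (T *ᵥ u) := by
  simp only [Matrix.trace, Matrix.diag, Matrix.mul_apply, vecMulVec_apply, dotProduct,
    Matrix.mulVec, Pi.star_apply]
  refine Finset.sum_congr rfl fun v _ => ?_
  rw [Finset.mul_sum]
  exact Finset.sum_congr rfl fun w _ => by ring

lemma completeness [DecidableEq ι] (y : ι → ι → ℂ)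
    (hy : ∀ i j, star (y i) ⬝ᵥ y j = if i = j then 1 else 0) :
    ∑ j, vecMulVec (y j) (star (y j)) = (1 : Matrix ι ι ℂ) := by
  set U : Matrix ι ι ℂ := Matrix.of fun a j => y j a with hU
  have h1 : Uᴴ * U = 1 := by
    ext i j
    have := hy i j
    simpa [Matrix.mul_apply, Matrix.conjTranspose_apply, dotProduct, Matrix.one_apply, hU,
      Pi.star_apply] using this
  have h2 : U * Uᴴ = 1 := mul_eq_one_comm.mp h1
  ext v w
  have := congrFun (congrFun h2 v) w
  simp only [Matrix.mul_apply, Matrix.conjTranspose_apply, hU, Matrix.of_apply,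
    Matrix.one_apply] at this
  simp only [Matrix.sum_apply, vecMulVec_apply, Pi.star_apply, Matrix.one_apply]
  simpa using this

lemma dot_vecMulVec (a w : ι → ℂ) :
    star w ⬝ᵥ (vecMulVec a (star a) *ᵥ w) = (Complex.normSq (star a ⬝ᵥ w) : ℂ) := by
  rw [vecMulVec_mulVec', dotProduct_smul]
  have h1 : star w ⬝ᵥ a = (starRingEnd ℂ) (star a ⬝ᵥ w) := by
    simp [dotProduct, map_sum, mul_comm]
  rw [smul_eq_mul, h1, mul_comm]
  exact (Complex.normSq_eq_conj_mul_self (z := star a ⬝ᵥ w)).symm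


lemma dot_sum (f : κ → ι → ℂ) (u : ι → ℂ) :
    u ⬝ᵥ (∑ j, f j) = ∑ j, u ⬝ᵥ f j := by
  simp only [dotProduct, Finset.sum_apply, Finset.mul_sum]
  exact Finset.sum_comm

lemma psd_sub_sq [DecidableEq ι] {T : Matrix ι ι ℂ} (hT : T.PosSemidef)
    (hT1 : (1 - T).PosSemidef) : (T - T * T).PosSemidef := by
  obtain ⟨S, hSh, hS⟩ : ∃ S : Matrix ι ι ℂ, Sᴴ = S ∧ S * S = T := by
    open scoped MatrixOrder in
    exact ⟨CFC.sqrt T, (CFC.sqrt_nonneg T).isSelfAdjoint, CFC.sqrt_mul_sqrt_self T hT.nonneg⟩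
  have h := hT1.mul_mul_conjTranspose_same S
  rw [hSh] at h
  have heq : S * (1 - T) * S = T - T * T := by
    have h1 : S * T * S = T * T := by rw [← hS]; noncomm_ring
    rw [Matrix.mul_sub, Matrix.mul_one, Matrix.sub_mul, hS, h1]
  rwa [heq] at h

/-- Parseval-type bound: for `0 ≤ T ≤ 1` and a complete orthonormal family `E`,
`∑ j ‖⟨E j, T u⟩‖² ≤ ⟨u, T u⟩`. -/
lemma key_parseval [DecidableEq ι] {T : Matrix ι ι ℂ} (hT : T.PosSemidef)
    (hT1 : (1 - T).PosSemidef) (E : ι → ι → ℂ)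
    (hE : ∑ j, vecMulVec (E j) (star (E j)) = (1 : Matrix ι ι ℂ)) (u : ι → ℂ) :
    ∑ j, Complex.normSq (star (E j) ⬝ᵥ (T *ᵥ u)) ≤ (star u ⬝ᵥ (T *ᵥ u)).re := by
  set w := T *ᵥ u with hw
  have h1 : star w ⬝ᵥ w = ∑ j, (Complex.normSq (star (E j) ⬝ᵥ w) : ℂ) := by
    calc star w ⬝ᵥ w = star w ⬝ᵥ ((∑ j, vecMulVec (E j) (star (E j))) *ᵥ w) := by
          rw [hE, Matrix.one_mulVec]
      _ = ∑ j, star w ⬝ᵥ (vecMulVec (E j) (star (E j)) *ᵥ w) := by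
          rw [sum_mulVec, dot_sum]
      _ = ∑ j, (Complex.normSq (star (E j) ⬝ᵥ w) : ℂ) :=
          Finset.sum_congr rfl fun j _ => dot_vecMulVec _ _
  have h2 : star w ⬝ᵥ w = star u ⬝ᵥ ((T * T) *ᵥ u) := by
    rw [hw, Matrix.star_mulVec, ← Matrix.mulVec_mulVec]
    rw [← Matrix.dotProduct_mulVec, hT.isHermitian.eq]
  have h3 : 0 ≤ star u ⬝ᵥ ((T - T * T) *ᵥ u) := (psd_sub_sq hT hT1).dotProduct_mulVec_nonneg u
  have h4 : (star u ⬝ᵥ ((T * T) *ᵥ u)).re ≤ (star u ⬝ᵥ (T *ᵥ u)).re := by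
    rw [Matrix.sub_mulVec, dotProduct_sub] at h3
    have := (Complex.le_def.mp h3).1
    simp only [Complex.zero_re, Complex.sub_re] at this
    linarith
  have h5 : (∑ j, (Complex.normSq (star (E j) ⬝ᵥ w) : ℂ)).re
      = ∑ j, Complex.normSq (star (E j) ⬝ᵥ w) := by
    rw [Complex.re_sum]
    simp
  calc ∑ j, Complex.normSq (star (E j) ⬝ᵥ w) = (star w ⬝ᵥ w).re := by rw [h1, h5]
    _ = (star u ⬝ᵥ ((T * T) *ᵥ u)).re := by rw [h2]
    _ ≤ (star u ⬝ᵥ (T *ᵥ u)).re := h4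

/-- Flip a Hermitian quadratic overlap. -/
lemma normSq_dot_flip {M : Matrix ι ι ℂ} (hM : M.IsHermitian) (u v : ι → ℂ) :
    Complex.normSq (star u ⬝ᵥ (M *ᵥ v)) = Complex.normSq (star v ⬝ᵥ (M *ᵥ u)) := by
  have key : star u ⬝ᵥ (M *ᵥ v) = (starRingEnd ℂ) (star v ⬝ᵥ (M *ᵥ u)) := by
    have hM' : ∀ a b, (starRingEnd ℂ) (M a b) = M b a := by
      intro a b
      have := congrFun (congrFun hM.eq b) a
      simpa [Matrix.conjTranspose_apply] using this
    simp only [dotProduct, Matrix.mulVec, Pi.star_apply, Complex.star_def, map_sum,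
      _root_.map_mul, Complex.conj_conj, Finset.mul_sum]
    rw [Finset.sum_comm]
    refine Finset.sum_congr rfl fun a _ => Finset.sum_congr rfl fun b _ => ?_
    rw [hM' a b]
    ring
  rw [key, Complex.normSq_conj]

/-- The scalar core inequality. -/
lemma scalar_core {s a b c : ℝ} (hs0 : 0 < s) (hs1 : s < 1)
    (ha : 0 ≤ a) (hb : 0 ≤ b) (hc : 0 ≤ c)
    (h : Real.sqrt c ≤ Real.sqrt a + Real.sqrt b) :
    s * (1 - s) * c ≤ (1 - s) * b + s * a := by
  have hta := Real.sq_sqrt ha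
  have htb := Real.sq_sqrt hb
  have htc := Real.sq_sqrt hc
  have h1 := Real.sqrt_nonneg a
  have h2 := Real.sqrt_nonneg b
  have h3 := Real.sqrt_nonneg c
  have hs1' : (0:ℝ) ≤ 1 - s := by linarith
  rw [← hta, ← htb, ← htc]
  nlinarith [mul_nonneg hs1' (sq_nonneg (Real.sqrt b - s * Real.sqrt c)),
    mul_nonneg hs0.le (sq_nonneg (Real.sqrt a - (1 - s) * Real.sqrt c)),
    mul_nonneg (mul_nonneg hs0.le hs1')
      (mul_nonneg h3 (by linarith : 0 ≤ Real.sqrt a + Real.sqrt b - Real.sqrt c))]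

/-- Tensor-product dot product factorization. -/
lemma dot_tensor {d n : ℕ} (f g : Fin d → Fin d → ℂ) (i j : Fin n → Fin d) :
    (star fun v : Fin n → Fin d => ∏ k, f (i k) (v k)) ⬝ᵥ
      (fun v : Fin n → Fin d => ∏ k, g (j k) (v k))
      = ∏ k, (star (f (i k)) ⬝ᵥ g (j k)) := by
  simp only [dotProduct, Pi.star_apply]
  rw [Fintype.prod_sum]
  refine Finset.sum_congr rfl fun v _ => ?_
  rw [star_prod, ← Finset.prod_mul_distrib]

end InfoSpec

/-- The optimal quantum type-II error trade-off. -/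
def qBeta {ι : Type*} [Fintype ι] [DecidableEq ι] (α : ℝ) (ρ σ : Matrix ι ι ℂ) : ℝ :=
  sInf { b : ℝ | ∃ T : Matrix ι ι ℂ,
    T.PosSemidef ∧ (1 - T).PosSemidef ∧ ((T * ρ).trace.re ≤ α) ∧
    b = 1 - (T * σ).trace.re }

/-- The `n`-fold tensor (Kronecker) power of a `d × d` matrix. -/
def tensorPow {d : ℕ} (ρ : Matrix (Fin d) (Fin d) ℂ) (n : ℕ) :
    Matrix (Fin n → Fin d) (Fin n → Fin d) ℂ :=
  fun i j => ∏ k, ρ (i k) (j k)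

/-- Inequality (42): information-spectrum-type upper bound on the quantum
hypothesis testing relative entropy in terms of the log-likelihood ratio of the
Nussbaum–Szkoła distributions. -/
theorem info_spectrum_upper_bound {d : ℕ} (ρ σ : Matrix (Fin d) (Fin d) ℂ)
    (hρ : ρ.PosSemidef) (hρtr : ρ.trace = 1)
    (hσ : σ.PosSemidef) (hσtr : σ.trace = 1)
    (lam mu : Fin d → ℝ) (x y : Fin d → (Fin d → ℂ))
    (hx : ∀ i j, star (x i) ⬝ᵥ x j = if i = j then 1 else 0)
    (hy : ∀ i j, star (y i) ⬝ᵥ y j = if i = j then 1 else 0)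
    (hρdec : ρ = ∑ i, (lam i : ℂ) • vecMulVec (x i) (star (x i)))
    (hσdec : σ = ∑ j, (mu j : ℂ) • vecMulVec (y j) (star (y j)))
    (P Q : Fin d × Fin d → ℝ)
    (hP : ∀ p, P p = lam p.1 * Complex.normSq (star (x p.1) ⬝ᵥ y p.2))
    (hQ : ∀ p, Q p = mu p.2 * Complex.normSq (star (x p.1) ⬝ᵥ y p.2))
    (hsupp : ∀ p, P p ≠ 0 → Q p ≠ 0)
    (n : ℕ) (hn : 1 ≤ n) (s R ε : ℝ) (hs0 : 0 < s) (hs1 : s < 1)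
    (hε0 : 0 ≤ ε) (hε1 : ε ≤ 1 - s)
    (hprob : ε / (1 - s) <
      ∑ ω : Fin n → Fin d × Fin d with
        (∑ k, Real.log (P (ω k) / Q (ω k))) ≤ R, ∏ k, P (ω k)) :
    -Real.log (qBeta ε (tensorPow ρ n) (tensorPow σ n)) ≤
      R - Real.log ((∑ ω : Fin n → Fin d × Fin d with
            (∑ k, Real.log (P (ω k) / Q (ω k))) ≤ R, ∏ k, P (ω k))
          - ε / (1 - s))
        - Real.log s := by
  have h1s : 0 < 1 - s := by linarith
  set W : ℝ := ∑ ω : Fin n → Fin d × Fin d with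
      (∑ k, Real.log (P (ω k) / Q (ω k))) ≤ R, ∏ k, P (ω k) with hW
  set A : Finset (Fin n → Fin d × Fin d) :=
    Finset.filter (fun ω : Fin n → Fin d × Fin d =>
      (∑ k, Real.log (P (ω k) / Q (ω k))) ≤ R) Finset.univ with hA
  have hWA : W = ∑ ω ∈ A, ∏ k, P (ω k) := hW
  -- nonnegativity of eigenvalues
  have eig : ∀ (z : Fin d → Fin d → ℂ) (c : Fin d → ℝ),
      (∀ i j, star (z i) ⬝ᵥ z j = if i = j then 1 else 0) → ∀ i : Fin d,
      star (z i) ⬝ᵥ ((∑ j, (c j : ℂ) • vecMulVec (z j) (star (z j))) *ᵥ z i) = (c i : ℂ) := by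
    intro z c hz i
    have term : ∀ j, star (z i) ⬝ᵥ (((c j : ℂ) • vecMulVec (z j) (star (z j))) *ᵥ z i)
        = (c j : ℂ) * ((if j = i then 1 else 0) * (if i = j then 1 else 0)) := by
      intro j
      rw [smul_mulVec, dotProduct_smul, InfoSpec.vecMulVec_mulVec', dotProduct_smul,
        hz j i, hz i j, smul_eq_mul, smul_eq_mul]
    rw [InfoSpec.sum_mulVec, InfoSpec.dot_sum,
      Finset.sum_congr rfl fun j _ => term j,
      Finset.sum_eq_single i (fun j _ hj => by simp [hj]) (by simp)]
    simp
  have hlam : ∀ i, 0 ≤ lam i := by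
    intro i
    have h0 := hρ.dotProduct_mulVec_nonneg (x i)
    rw [hρdec, eig x lam hx i] at h0
    exact Complex.zero_le_real.mp h0
  have hmu : ∀ j, 0 ≤ mu j := by
    intro j
    have h0 := hσ.dotProduct_mulVec_nonneg (y j)
    rw [hσdec, eig y mu hy j] at h0
    exact Complex.zero_le_real.mp h0
  have hPnn : ∀ p, 0 ≤ P p := fun p => by
    rw [hP p]; exact mul_nonneg (hlam _) (Complex.normSq_nonneg _)
  have hQnn : ∀ p, 0 ≤ Q p := fun p => by
    rw [hQ p]; exact mul_nonneg (hmu _) (Complex.normSq_nonneg _)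
  -- tensor families
  set X : (Fin n → Fin d) → (Fin n → Fin d) → ℂ := fun i v => ∏ k, x (i k) (v k) with hXdef
  set Y : (Fin n → Fin d) → (Fin n → Fin d) → ℂ := fun j v => ∏ k, y (j k) (v k) with hYdef
  set Λ : (Fin n → Fin d) → ℝ := fun i => ∏ k, lam (i k) with hΛdef
  set Mm : (Fin n → Fin d) → ℝ := fun j => ∏ k, mu (j k) with hMdef
  have hΛ : ∀ i, 0 ≤ Λ i := fun i => Finset.prod_nonneg fun k _ => hlam _
  have hMm : ∀ j, 0 ≤ Mm j := fun j => Finset.prod_nonneg fun k _ => hmu _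
  have hXdot : ∀ i j, star (X i) ⬝ᵥ X j = ∏ k, (star (x (i k)) ⬝ᵥ x (j k)) :=
    fun i j => InfoSpec.dot_tensor x x i j
  have hYdot : ∀ i j, star (Y i) ⬝ᵥ Y j = ∏ k, (star (y (i k)) ⬝ᵥ y (j k)) :=
    fun i j => InfoSpec.dot_tensor y y i j
  have hXYdot : ∀ i j, star (X i) ⬝ᵥ Y j = ∏ k, (star (x (i k)) ⬝ᵥ y (j k)) :=
    fun i j => InfoSpec.dot_tensor x y i j
  have onfam : ∀ (z : Fin d → Fin d → ℂ),
      (∀ i j, star (z i) ⬝ᵥ z j = if i = j then 1 else 0) →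
      ∀ i j : Fin n → Fin d,
        (∏ k, (star (z (i k)) ⬝ᵥ z (j k))) = if i = j then 1 else 0 := by
    intro z hz i j
    by_cases hij : i = j
    · subst hij; simp [hz]
    · obtain ⟨k, hk⟩ := Function.ne_iff.mp hij
      rw [if_neg hij]
      exact Finset.prod_eq_zero (Finset.mem_univ k) (by rw [hz]; simp [hk])
  have hXon : ∀ i j, star (X i) ⬝ᵥ X j = if i = j then 1 else 0 :=
    fun i j => (hXdot i j).trans (onfam x hx i j)
  have hYon : ∀ i j, star (Y i) ⬝ᵥ Y j = if i = j then 1 else 0 :=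
    fun i j => (hYdot i j).trans (onfam y hy i j)
  have hXcomp : ∑ i, vecMulVec (X i) (star (X i)) = 1 := InfoSpec.completeness X hXon
  have hYcomp : ∑ j, vecMulVec (Y j) (star (Y j)) = 1 := InfoSpec.completeness Y hYon
  -- tensor decomposition
  have tensor_dec : ∀ (z : Fin d → Fin d → ℂ) (c : Fin d → ℝ)
      (M : Matrix (Fin d) (Fin d) ℂ),
      M = ∑ i0, (c i0 : ℂ) • vecMulVec (z i0) (star (z i0)) →
      tensorPow M n = ∑ i : Fin n → Fin d, ((∏ k, c (i k) : ℝ) : ℂ) •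
        vecMulVec (fun v => ∏ k, z (i k) (v k)) (star fun v => ∏ k, z (i k) (v k)) := by
    intro z c M hdec
    ext v w
    have hent : ∀ a b' : Fin d, M a b' = ∑ i0, (c i0 : ℂ) * (z i0 a * star (z i0 b')) := by
      intro a b'
      rw [hdec]
      simp [Matrix.sum_apply, vecMulVec_apply]
    calc (tensorPow M n) v w
        = ∏ k, ∑ i0, (c i0 : ℂ) * (z i0 (v k) * star (z i0 (w k))) :=
          Finset.prod_congr rfl fun k _ => hent _ _
      _ = ∑ i : Fin n → Fin d, ∏ k, (c (i k) : ℂ) * (z (i k) (v k) * star (z (i k) (w k))) := by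
          rw [Fintype.prod_sum]
      _ = (∑ i : Fin n → Fin d, ((∏ k, c (i k) : ℝ) : ℂ) •
            vecMulVec (fun v => ∏ k, z (i k) (v k)) (star fun v => ∏ k, z (i k) (v k))) v w := by
          rw [Matrix.sum_apply]
          refine Finset.sum_congr rfl fun i _ => ?_
          simp only [Matrix.smul_apply, vecMulVec_apply, Pi.star_apply, smul_eq_mul]
          rw [Complex.ofReal_prod, star_prod, ← Finset.prod_mul_distrib,
            ← Finset.prod_mul_distrib]
  have hρn : tensorPow ρ n = ∑ i, ((Λ i : ℝ) : ℂ) • vecMulVec (X i) (star (X i)) :=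
    tensor_dec x lam ρ hρdec
  have hσn : tensorPow σ n = ∑ j, ((Mm j : ℝ) : ℂ) • vecMulVec (Y j) (star (Y j)) :=
    tensor_dec y mu σ hσdec
  -- trace formulas
  have trace_dec : ∀ (T' : Matrix (Fin n → Fin d) (Fin n → Fin d) ℂ)
      (c : (Fin n → Fin d) → ℝ) (F : (Fin n → Fin d) → (Fin n → Fin d) → ℂ),
      ((T' * ∑ i, (c i : ℂ) • vecMulVec (F i) (star (F i))).trace).re
        = ∑ i, c i * (star (F i) ⬝ᵥ (T' *ᵥ F i)).re := by
    intro T' c F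
    rw [Finset.mul_sum, Matrix.trace_sum]
    rw [Finset.sum_congr rfl fun i (_ : i ∈ Finset.univ) => by
      rw [Matrix.mul_smul, Matrix.trace_smul, InfoSpec.trace_mul_vecMulVec, smul_eq_mul]]
    rw [Complex.re_sum]
    exact Finset.sum_congr rfl fun i _ => Complex.re_ofReal_mul _ _
  have htrρre : ∀ T' : Matrix (Fin n → Fin d) (Fin n → Fin d) ℂ,
      ((T' * tensorPow ρ n).trace).re = ∑ i, Λ i * (star (X i) ⬝ᵥ (T' *ᵥ X i)).re := by
    intro T'; rw [hρn]; exact trace_dec T' Λ X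
  have htrσre : ∀ T' : Matrix (Fin n → Fin d) (Fin n → Fin d) ℂ,
      ((T' * tensorPow σ n).trace).re = ∑ j, Mm j * (star (Y j) ⬝ᵥ (T' *ᵥ Y j)).re := by
    intro T'; rw [hσn]; exact trace_dec T' Mm Y
  have htrσn : (tensorPow σ n).trace = 1 := by
    have h1 : ∑ t, σ t t = 1 := by simpa [Matrix.trace, Matrix.diag] using hσtr
    have h2 : (tensorPow σ n).trace = ∑ v : Fin n → Fin d, ∏ k, σ (v k) (v k) := rfl
    rw [h2, ← Fintype.prod_sum (fun (_ : Fin n) (t : Fin d) => σ t t)]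
    simp [h1]
  -- product distribution identities
  have prodP : ∀ ω : Fin n → Fin d × Fin d,
      ∏ k, P (ω k) = Λ (fun k => (ω k).1) *
        Complex.normSq (star (X (fun k => (ω k).1)) ⬝ᵥ Y (fun k => (ω k).2)) := by
    intro ω
    simp only [hΛdef]
    rw [hXYdot, map_prod Complex.normSq, ← Finset.prod_mul_distrib]
    exact Finset.prod_congr rfl fun k _ => hP (ω k)
  have prodQ : ∀ ω : Fin n → Fin d × Fin d,
      ∏ k, Q (ω k) = Mm (fun k => (ω k).2) *
        Complex.normSq (star (X (fun k => (ω k).1)) ⬝ᵥ Y (fun k => (ω k).2)) := by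
    intro ω
    simp only [hMdef]
    rw [hXYdot, map_prod Complex.normSq, ← Finset.prod_mul_distrib]
    exact Finset.prod_congr rfl fun k _ => hQ (ω k)
  -- positivity of the target quantity
  have hWpos : 0 < W - ε / (1 - s) := by linarith [hprob]
  set e : ℝ := Real.exp (-R) with he
  have hepos : 0 < e := Real.exp_pos _
  set δ : ℝ := s * e * (W - ε / (1 - s)) with hδ
  have hδpos : 0 < δ := by positivity
  -- the key bound: every admissible test has type-II error at least δ
  have hbound : ∀ b ∈ { b : ℝ | ∃ T : Matrix (Fin n → Fin d) (Fin n → Fin d) ℂ,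
      T.PosSemidef ∧ (1 - T).PosSemidef ∧ ((T * tensorPow ρ n).trace.re ≤ ε) ∧
      b = 1 - (T * tensorPow σ n).trace.re }, δ ≤ b := by
    rintro b ⟨T, hT, hT1, hTρ, rfl⟩
    set aa : (Fin n → Fin d) → (Fin n → Fin d) → ℝ :=
      fun i j => Complex.normSq (star (X i) ⬝ᵥ (T *ᵥ Y j)) with haa
    set bb : (Fin n → Fin d) → (Fin n → Fin d) → ℝ :=
      fun i j => Complex.normSq (star (X i) ⬝ᵥ ((1 - T) *ᵥ Y j)) with hbb
    set cc : (Fin n → Fin d) → (Fin n → Fin d) → ℝ :=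
      fun i j => Complex.normSq (star (X i) ⬝ᵥ Y j) with hcc
    have haa0 : ∀ i j, 0 ≤ aa i j := fun i j => Complex.normSq_nonneg _
    have hbb0 : ∀ i j, 0 ≤ bb i j := fun i j => Complex.normSq_nonneg _
    have hcc0 : ∀ i j, 0 ≤ cc i j := fun i j => Complex.normSq_nonneg _
    have F1 : ∀ i, ∑ j, aa i j ≤ (star (X i) ⬝ᵥ (T *ᵥ X i)).re := by
      intro i
      have h := InfoSpec.key_parseval hT hT1 Y hYcomp (X i)
      calc ∑ j, aa i j = ∑ j, Complex.normSq (star (Y j) ⬝ᵥ (T *ᵥ X i)) :=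
            Finset.sum_congr rfl fun j _ =>
              InfoSpec.normSq_dot_flip hT.isHermitian (X i) (Y j)
        _ ≤ _ := h
    have F2 : ∀ j, ∑ i, bb i j ≤ (star (Y j) ⬝ᵥ ((1 - T) *ᵥ Y j)).re := by
      intro j
      exact InfoSpec.key_parseval hT1 (by rw [sub_sub_cancel]; exact hT) X hXcomp (Y j)
    have F3 : ∀ i j, Real.sqrt (cc i j) ≤ Real.sqrt (aa i j) + Real.sqrt (bb i j) := by
      intro i j
      simp only [haa, hbb, hcc]
      rw [← Complex.norm_def, ← Complex.norm_def, ← Complex.norm_def]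
      have hsplit : star (X i) ⬝ᵥ Y j
          = star (X i) ⬝ᵥ (T *ᵥ Y j) + star (X i) ⬝ᵥ ((1 - T) *ᵥ Y j) := by
        rw [← dotProduct_add, ← Matrix.add_mulVec,
          show T + (1 - T) = (1 : Matrix (Fin n → Fin d) (Fin n → Fin d) ℂ) by abel,
          Matrix.one_mulVec]
      rw [hsplit]
      exact norm_add_le _ _
    -- per-sample inequality
    have hper : ∀ ω ∈ A, s * e * (∏ k, P (ω k))
        ≤ Mm (fun k => (ω k).2) * bb (fun k => (ω k).1) (fun k => (ω k).2)
          + (s * e / (1 - s)) * (Λ (fun k => (ω k).1) * aa (fun k => (ω k).1) (fun k => (ω k).2)) := by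
      intro ω hω
      by_cases hP0 : (∏ k, P (ω k)) = 0
      · rw [hP0, mul_zero]
        exact add_nonneg (mul_nonneg (hMm _) (hbb0 _ _))
          (mul_nonneg (le_of_lt (div_pos (mul_pos hs0 hepos) h1s))
            (mul_nonneg (hΛ _) (haa0 _ _)))
      · have hPk : ∀ k, 0 < P (ω k) := by
          intro k
          rcases (hPnn (ω k)).lt_or_eq with h | h
          · exact h
          · exact absurd (Finset.prod_eq_zero (Finset.mem_univ k) h.symm) hP0
        have hQk : ∀ k, 0 < Q (ω k) := fun k =>
          lt_of_le_of_ne (hQnn (ω k)) (Ne.symm (hsupp (ω k) (hPk k).ne'))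
        have hPpos : 0 < ∏ k, P (ω k) := Finset.prod_pos fun k _ => hPk k
        have hQpos : 0 < ∏ k, Q (ω k) := Finset.prod_pos fun k _ => hQk k
        have hA' : (∑ k, Real.log (P (ω k) / Q (ω k))) ≤ R := (Finset.mem_filter.mp hω).2
        have hratio : (∏ k, P (ω k)) / (∏ k, Q (ω k)) ≤ Real.exp R := by
          rw [← Finset.prod_div_distrib]
          calc ∏ k, P (ω k) / Q (ω k)
              = Real.exp (∑ k, Real.log (P (ω k) / Q (ω k))) := by
                rw [Real.exp_sum]
                exact Finset.prod_congr rfl fun k _ =>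
                  (Real.exp_log (div_pos (hPk k) (hQk k))).symm
            _ ≤ Real.exp R := Real.exp_le_exp.mpr hA'
        have hPQ : e * ∏ k, P (ω k) ≤ ∏ k, Q (ω k) := by
          rw [div_le_iff₀ hQpos] at hratio
          have h2 := mul_le_mul_of_nonneg_left hratio (le_of_lt hepos)
          calc e * ∏ k, P (ω k) ≤ e * (Real.exp R * ∏ k, Q (ω k)) := h2
            _ = ∏ k, Q (ω k) := by
                rw [he, ← mul_assoc, ← Real.exp_add]; simp
        set i0 : Fin n → Fin d := fun k => (ω k).1 with hi0
        set j0 : Fin n → Fin d := fun k => (ω k).2 with hj0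
        have hPc : (∏ k, P (ω k)) = Λ i0 * cc i0 j0 := prodP ω
        have hQc : (∏ k, Q (ω k)) = Mm j0 * cc i0 j0 := prodQ ω
        have hccpos : 0 < cc i0 j0 := by
          rcases (hcc0 i0 j0).lt_or_eq with h | h
          · exact h
          · exfalso; rw [hPc, ← h, mul_zero] at hPpos; exact lt_irrefl _ hPpos
        have hΛpos : 0 < Λ i0 := by
          rcases (hΛ i0).lt_or_eq with h | h
          · exact h
          · exfalso; rw [hPc, ← h, zero_mul] at hPpos; exact lt_irrefl _ hPpos
        have hMge : e * Λ i0 ≤ Mm j0 := by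
          have h3 : e * (Λ i0 * cc i0 j0) ≤ Mm j0 * cc i0 j0 := by
            rw [← hPc, ← hQc]; exact hPQ
          have h4 : (e * Λ i0) * cc i0 j0 ≤ Mm j0 * cc i0 j0 := by
            rw [mul_assoc]; exact h3
          exact le_of_mul_le_mul_right h4 hccpos
        have hscal : s * (1 - s) * cc i0 j0 ≤ (1 - s) * bb i0 j0 + s * aa i0 j0 :=
          InfoSpec.scalar_core hs0 hs1 (haa0 _ _) (hbb0 _ _) (hcc0 _ _) (F3 i0 j0)
        rw [hPc]
        calc s * e * (Λ i0 * cc i0 j0)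
            = (e * Λ i0 / (1 - s)) * (s * (1 - s) * cc i0 j0) := by
              field_simp
          _ ≤ (e * Λ i0 / (1 - s)) * ((1 - s) * bb i0 j0 + s * aa i0 j0) :=
              mul_le_mul_of_nonneg_left hscal
                (le_of_lt (div_pos (mul_pos hepos hΛpos) h1s))
          _ = (e * Λ i0) * bb i0 j0 + (s * e / (1 - s)) * (Λ i0 * aa i0 j0) := by
              field_simp
          _ ≤ Mm j0 * bb i0 j0 + (s * e / (1 - s)) * (Λ i0 * aa i0 j0) :=
              add_le_add_left (mul_le_mul_of_nonneg_right hMge (hbb0 _ _)) _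
    -- summing the type-I side
    have reidx : ∀ F : (Fin n → Fin d) → (Fin n → Fin d) → ℝ,
        (∑ ω : Fin n → Fin d × Fin d, F (fun k => (ω k).1) (fun k => (ω k).2))
          = ∑ p : (Fin n → Fin d) × (Fin n → Fin d), F p.1 p.2 := by
      intro F
      exact Fintype.sum_equiv (Equiv.arrowProdEquivProdArrow (Fin n) (fun _ => Fin d) (fun _ => Fin d)) _ _
        (fun ω => rfl)
    have sumA_a : ∑ ω ∈ A, Λ (fun k => (ω k).1) * aa (fun k => (ω k).1) (fun k => (ω k).2) ≤ ε := by
      have step1 : ∑ ω ∈ A, Λ (fun k => (ω k).1) * aa (fun k => (ω k).1) (fun k => (ω k).2)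
          ≤ ∑ ω : Fin n → Fin d × Fin d,
              Λ (fun k => (ω k).1) * aa (fun k => (ω k).1) (fun k => (ω k).2) := by
        rw [hA]
        exact Finset.sum_le_sum_of_subset_of_nonneg (Finset.filter_subset _ _)
          (fun ω _ _ => mul_nonneg (hΛ _) (haa0 _ _))
      have step2 : (∑ ω : Fin n → Fin d × Fin d,
            Λ (fun k => (ω k).1) * aa (fun k => (ω k).1) (fun k => (ω k).2))
          = ∑ i, ∑ j, Λ i * aa i j := by
        rw [reidx fun i j => Λ i * aa i j, Fintype.sum_prod_type]
      have step3 : ∑ i, ∑ j, Λ i * aa i j ≤ ∑ i, Λ i * (star (X i) ⬝ᵥ (T *ᵥ X i)).re :=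
        Finset.sum_le_sum fun i _ => by
          rw [← Finset.mul_sum]
          exact mul_le_mul_of_nonneg_left (F1 i) (hΛ i)
      have step4 : (∑ i, Λ i * (star (X i) ⬝ᵥ (T *ᵥ X i)).re) = (T * tensorPow ρ n).trace.re :=
        (htrρre T).symm
      linarith [hTρ]
    -- summing the type-II side
    have sumA_b : ∑ ω ∈ A, Mm (fun k => (ω k).2) * bb (fun k => (ω k).1) (fun k => (ω k).2)
        ≤ 1 - (T * tensorPow σ n).trace.re := by
      have step1 : ∑ ω ∈ A, Mm (fun k => (ω k).2) * bb (fun k => (ω k).1) (fun k => (ω k).2)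
          ≤ ∑ ω : Fin n → Fin d × Fin d,
              Mm (fun k => (ω k).2) * bb (fun k => (ω k).1) (fun k => (ω k).2) := by
        rw [hA]
        exact Finset.sum_le_sum_of_subset_of_nonneg (Finset.filter_subset _ _)
          (fun ω _ _ => mul_nonneg (hMm _) (hbb0 _ _))
      have step2 : (∑ ω : Fin n → Fin d × Fin d,
            Mm (fun k => (ω k).2) * bb (fun k => (ω k).1) (fun k => (ω k).2))
          = ∑ j, ∑ i, Mm j * bb i j := by
        rw [reidx fun i j => Mm j * bb i j, Fintype.sum_prod_type_right]
      have step3 : ∑ j, ∑ i, Mm j * bb i j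
          ≤ ∑ j, Mm j * (star (Y j) ⬝ᵥ ((1 - T) *ᵥ Y j)).re :=
        Finset.sum_le_sum fun j _ => by
          rw [← Finset.mul_sum]
          exact mul_le_mul_of_nonneg_left (F2 j) (hMm j)
      have step4 : (∑ j, Mm j * (star (Y j) ⬝ᵥ ((1 - T) *ᵥ Y j)).re)
          = ((1 - T) * tensorPow σ n).trace.re := (htrσre (1 - T)).symm
      have step5 : ((1 - T) * tensorPow σ n).trace.re = 1 - (T * tensorPow σ n).trace.re := by
        rw [Matrix.sub_mul, Matrix.one_mul, Matrix.trace_sub, Complex.sub_re, htrσn]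
        simp
      linarith
    -- combine
    have main : s * e * W ≤ (1 - (T * tensorPow σ n).trace.re) + (s * e / (1 - s)) * ε := by
      have h0 : s * e * W = ∑ ω ∈ A, s * e * ∏ k, P (ω k) := by
        rw [hWA, Finset.mul_sum]
      have h1 : (∑ ω ∈ A, s * e * ∏ k, P (ω k))
          ≤ ∑ ω ∈ A, (Mm (fun k => (ω k).2) * bb (fun k => (ω k).1) (fun k => (ω k).2)
            + (s * e / (1 - s)) * (Λ (fun k => (ω k).1) * aa (fun k => (ω k).1) (fun k => (ω k).2))) :=
        Finset.sum_le_sum hper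
      rw [Finset.sum_add_distrib, ← Finset.mul_sum, ← Finset.mul_sum] at h1
      have h2 := mul_le_mul_of_nonneg_left sumA_a
        (le_of_lt (div_pos (mul_pos hs0 hepos) h1s))
      linarith
    have expand : δ = s * e * W - (s * e / (1 - s)) * ε := by
      rw [hδ]; field_simp
    linarith
  -- wrap up via the infimum
  have hmem : (1 : ℝ) ∈ { b : ℝ | ∃ T : Matrix (Fin n → Fin d) (Fin n → Fin d) ℂ,
      T.PosSemidef ∧ (1 - T).PosSemidef ∧ ((T * tensorPow ρ n).trace.re ≤ ε) ∧
      b = 1 - (T * tensorPow σ n).trace.re } := by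
    refine ⟨0, Matrix.PosSemidef.zero, by rw [sub_zero]; exact Matrix.PosSemidef.one, ?_, ?_⟩
    · simp [hε0]
    · simp
  have hq : δ ≤ qBeta ε (tensorPow ρ n) (tensorPow σ n) :=
    le_csInf ⟨1, hmem⟩ hbound
  have hlogδ : Real.log δ = Real.log s + (-R) + Real.log (W - ε / (1 - s)) := by
    rw [hδ, Real.log_mul (by positivity) (ne_of_gt hWpos),
      Real.log_mul (ne_of_gt hs0) (ne_of_gt hepos), he, Real.log_exp]
  have hlog_le : Real.log δ ≤ Real.log (qBeta ε (tensorPow ρ n) (tensorPow σ n)) :=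
    Real.log_le_log hδpos hq
  linarith
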